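/- Let R be a commutative Noetherian ring, let I be an ideal of R containing a nonzerodivisor, and let x ∈ I be a nonzerodivisor on R. Then tr_R(I) = (I·(x : I) : x). -/
import Mathlib


/-- The trace ideal of an `R`-module `M`: the ideal of `R` generated by all values `f(m)`
for `f ∈ Hom_R(M, R)` and `m ∈ M`. -/
def traceIdeal (R : Type*) (M : Type*) [CommRing R] [AddCommGroup M] [Module R M] : Ideal R :=
  Ideal.span {r : R | ∃ (f : M →ₗ[R] R) (m : M), f m = r}

/-- Division-by-`x` homomorphism `I → R`, `c ↦ (b*c)/x`, for `b` with `b·I ⊆ (x)`. -/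
noncomputable def divHom {R : Type*} [CommRing R] (I : Ideal R) (x b : R)
    (hx : x ∈ nonZeroDivisors R) (hb : ∀ c ∈ I, ∃ u, b * c = x * u) : ↥I →ₗ[R] R where
  toFun c := (hb c.1 c.2).choose
  map_add' c d := by
    have h1 := (hb c.1 c.2).choose_spec
    have h2 := (hb d.1 d.2).choose_spec
    have h3 := (hb (c + d).1 (c + d).2).choose_spec
    apply (mul_cancel_left_mem_nonZeroDivisors hx).1
    push_cast at h3 ⊢
    linear_combination h3.symm + h1 + h2
  map_smul' r c := by
    have h1 := (hb c.1 c.2).choose_spec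
    have h3 := (hb (r • c).1 (r • c).2).choose_spec
    apply (mul_cancel_left_mem_nonZeroDivisors hx).1
    simp only [RingHom.id_apply, smul_eq_mul]
    push_cast at h3 ⊢
    have h3' : b * (r * c.1) = x * (hb ((r • c) : ↥I).1 (r • c).2).choose := h3
    linear_combination h3'.symm + r * h1

theorem divHom_spec {R : Type*} [CommRing R] (I : Ideal R) (x b : R)
    (hx : x ∈ nonZeroDivisors R) (hb : ∀ c ∈ I, ∃ u, b * c = x * u) (c : ↥I) :
    b * c.1 = x * divHom I x b hx hb c := (hb c.1 c.2).choose_spec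

/-- Let `R` be a commutative Noetherian ring, `I` an ideal of `R` containing a
nonzerodivisor, and `x ∈ I` a nonzerodivisor on `R`.  Then `tr_R(I) = (I·(x : I) : x)`. -/
theorem traceIdeal_eq_colon {R : Type*} [CommRing R] [IsNoetherianRing R] (I : Ideal R)
    (hgrade : ∃ r ∈ I, r ∈ nonZeroDivisors R)
    (x : R) (hxI : x ∈ I) (hx : x ∈ nonZeroDivisors R) :
    traceIdeal R ↥I = (I * ((Ideal.span {x}).colon I)).colon (Ideal.span {x}) := by
  apply le_antisymm
  · apply Ideal.span_le.2
    rintro r ⟨f, m, rfl⟩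
    show f m ∈ (I * ((Ideal.span {x}).colon I)).colon (Ideal.span {x})
    rw [Ideal.mem_colon_span_singleton]
    have key : f m * x = m.1 * f ⟨x, hxI⟩ := by
      have h1 : (x : R) • m = (m.1 : R) • (⟨x, hxI⟩ : ↥I) := by
        ext
        simp [mul_comm]
      calc f m * x = f (x • m) := by rw [map_smul]; simp [mul_comm]
        _ = m.1 * f ⟨x, hxI⟩ := by rw [h1, map_smul]; simp
    rw [key]
    apply Ideal.mul_mem_mul m.2
    rw [Submodule.mem_colon]
    intro p hp
    have h2 : (p : R) • (⟨x, hxI⟩ : ↥I) = x • (⟨p, hp⟩ : ↥I) := by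
      ext; simp [mul_comm]
    have : f ⟨x, hxI⟩ • p = x * f ⟨p, hp⟩ := by
      rw [smul_eq_mul, mul_comm, ← smul_eq_mul, ← map_smul, h2, map_smul, smul_eq_mul]
    rw [this, Ideal.mem_span_singleton]
    exact Dvd.intro _ rfl
  · intro r hr
    rw [Ideal.mem_colon_span_singleton] at hr
    have key : ∀ y ∈ I * ((Ideal.span {x}).colon I), ∃ t ∈ traceIdeal R ↥I, y = x * t := by
      intro y hy
      refine Submodule.mul_induction_on hy ?_ ?_
      · intro a ha b hb
        have hb' : ∀ c ∈ I, ∃ u, b * c = x * u := by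
          intro c hc
          have := Submodule.mem_colon.1 hb c hc
          rw [Ideal.mem_span_singleton] at this
          obtain ⟨u, hu⟩ := this
          exact ⟨u, by rw [smul_eq_mul] at hu; rw [← hu]⟩
        refine ⟨divHom I x b hx hb' ⟨a, ha⟩, ?_, ?_⟩
        · exact Ideal.subset_span ⟨divHom I x b hx hb', ⟨a, ha⟩, rfl⟩
        · rw [← divHom_spec I x b hx hb' ⟨a, ha⟩]; ring
      · rintro y z ⟨t, ht, rfl⟩ ⟨s, hs, rfl⟩
        exact ⟨t + s, Ideal.add_mem _ ht hs, by ring⟩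
    obtain ⟨t, ht, hxt⟩ := key _ hr
    have : t = r := by
      apply (mul_cancel_left_mem_nonZeroDivisors hx).1
      rw [← hxt]; ring
    rwa [← this]
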